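/- Let f : [0,1) → [0,1) be a piecewise increasing λ-contraction with finite singular set, and suppose Q = ⋃_{n≥0} f^{-n}(S) is finite. If x is a periodic point of f of period p, then the connected component W of [0,1)\S⁽ᵖ⁾ containing x satisfies f^p(W) ⊆ W, and ω(f,z) = O(f,x) for every z ∈ W. -/

import Mathlib

/-- The ω-limit set of `x` under iteration of `f`: the cluster points of the orbit. -/
def omegaSet (f : ℝ → ℝ) (x : ℝ) : Set ℝ :=
  {y | MapClusterPt y Filter.atTop fun n => f^[n] x}

lemma key_lemma (f : ℝ → ℝ) (S : Set ℝ) (lam : ℝ)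
    (hlam0 : 0 < lam) (hSsub : S ⊆ Set.Ico 0 1)
    (hmap : Set.MapsTo f (Set.Ico 0 1) (Set.Ico 0 1))
    (hpiece : ∀ x ∈ Set.Ico (0:ℝ) 1, ∀ y ∈ Set.Ico (0:ℝ) 1, x < y →
      (∀ s ∈ S, s ∉ Set.Ioc x y) → f x < f y ∧ f y - f x ≤ lam * (y - x)) :
    ∀ (k : ℕ) (c d : ℝ), c ∈ Set.Ico (0:ℝ) 1 → d ∈ Set.Ico (0:ℝ) 1 → c ≤ d →
    (∀ s, s ∈ Set.Ico (0:ℝ) 1 → (∃ j < k, f^[j] s ∈ S) → s ∉ Set.Ioc c d) →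
    f^[k] c ≤ f^[k] d ∧ f^[k] d - f^[k] c ≤ lam ^ k * (d - c) := by
  intro k
  induction k with
  | zero => intro c d _ _ hcd _; simpa using hcd
  | succ k ih =>
    intro c d hc hd hcd hfree
    rcases eq_or_lt_of_le hcd with rfl | hlt
    · simp
    have hSfree : ∀ s ∈ S, s ∉ Set.Ioc c d := by
      intro s hs
      exact hfree s (hSsub hs) ⟨0, Nat.succ_pos k, by simpa using hs⟩
    obtain ⟨h1, h2⟩ := hpiece c hc d hd hlt hSfree
    have hmono : ∀ u ∈ Set.Icc c d, ∀ v ∈ Set.Icc c d, u < v →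
        f u < f v ∧ f v - f u ≤ lam * (v - u) := by
      intro u hu v hv huv
      refine hpiece u ⟨le_trans hc.1 hu.1, lt_of_le_of_lt hu.2 hd.2⟩
        v ⟨le_trans hc.1 hv.1, lt_of_le_of_lt hv.2 hd.2⟩ huv ?_
      intro s hs hsmem
      exact hSfree s hs ⟨lt_of_le_of_lt hu.1 hsmem.1, le_trans hsmem.2 hv.2⟩
    have hcont : ContinuousOn f (Set.Icc c d) := by
      refine LipschitzOnWith.continuousOn (K := NNReal.mk lam hlam0.le) ?_
      refine LipschitzOnWith.of_dist_le_mul ?_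
      intro u hu v hv
      rcases lt_trichotomy u v with h | h | h
      · have := hmono u hu v hv h
        rw [Real.dist_eq, Real.dist_eq, abs_of_nonpos (by linarith [this.1]),
          abs_of_nonpos (by linarith)]
        rw [NNReal.coe_mk]
        linarith [this.2]
      · simp [h]
      · have := hmono v hv u hu h
        rw [Real.dist_eq, Real.dist_eq, abs_of_nonneg (by linarith [this.1]),
          abs_of_nonneg (by linarith)]
        rw [NNReal.coe_mk]
        linarith [this.2]
    have hfree' : ∀ s, s ∈ Set.Ico (0:ℝ) 1 → (∃ j < k, f^[j] s ∈ S) →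
        s ∉ Set.Ioc (f c) (f d) := by
      rintro s hs ⟨j, hj, hjs⟩ hmem
      have : s ∈ Set.Icc (f c) (f d) := ⟨hmem.1.le, hmem.2⟩
      obtain ⟨u, hu, hus⟩ := intermediate_value_Icc hcd hcont this
      have huc : c < u := by
        rcases eq_or_lt_of_le hu.1 with rfl | h
        · exact absurd hus (by linarith [hmem.1])
        · exact h
      refine hfree u ⟨le_trans hc.1 hu.1, lt_of_le_of_lt hu.2 hd.2⟩
        ⟨j + 1, Nat.succ_lt_succ hj, ?_⟩ ⟨huc, hu.2⟩
      rw [Function.iterate_succ_apply, hus]; exact hjs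
    obtain ⟨ha, hb⟩ := ih (f c) (f d) (hmap hc) (hmap hd) h1.le hfree'
    rw [Function.iterate_succ_apply, Function.iterate_succ_apply]
    refine ⟨ha, ?_⟩
    calc f^[k] (f d) - f^[k] (f c) ≤ lam ^ k * (f d - f c) := hb
      _ ≤ lam ^ k * (lam * (d - c)) := by
          apply mul_le_mul_of_nonneg_left h2 (pow_nonneg hlam0.le k)
      _ = lam ^ (k+1) * (d - c) := by ring


set_option maxHeartbeats 1000000

/-- Let `f` be a piecewise increasing λ-contraction of `[0,1)` with
finite singular set `S` and `Q = ⋃_{n≥0} f^{-n}(S)` finite.  If `x` is a periodic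
point of period `p`, then the piece `W` of the partition of `[0,1)` induced by
`S⁽ᵖ⁾ = ⋃_{j<p} f^{-j}(S)` containing `x` (the set of points not separated from `x`
by any point of `S⁽ᵖ⁾`) satisfies `f^[p] W ⊆ W`, and `ω(f,z) = O(f,x)` for every
`z ∈ W`. -/
theorem stmt_18 (f : ℝ → ℝ) (S : Set ℝ) (lam : ℝ)
    (hlam0 : 0 < lam) (hlam1 : lam < 1)
    (hSfin : S.Finite) (hS0 : (0:ℝ) ∈ S) (hSsub : S ⊆ Set.Ico 0 1)
    (hmap : Set.MapsTo f (Set.Ico 0 1) (Set.Ico 0 1))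
    (hrc : ∀ x ∈ Set.Ico (0:ℝ) 1, ContinuousWithinAt f (Set.Ici x) x)
    (hpiece : ∀ x ∈ Set.Ico (0:ℝ) 1, ∀ y ∈ Set.Ico (0:ℝ) 1, x < y →
      (∀ s ∈ S, s ∉ Set.Ioc x y) → f x < f y ∧ f y - f x ≤ lam * (y - x))
    (hQfin : {x | x ∈ Set.Ico (0:ℝ) 1 ∧ ∃ n : ℕ, f^[n] x ∈ S}.Finite)
    (x : ℝ) (hx : x ∈ Set.Ico (0:ℝ) 1) (p : ℕ) (hp : 1 ≤ p) (hxper : f^[p] x = x) :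
    Set.MapsTo (f^[p])
      {y | y ∈ Set.Ico (0:ℝ) 1 ∧ ∀ s,
        (s ∈ Set.Ico (0:ℝ) 1 ∧ ∃ j < p, f^[j] s ∈ S) →
        s ∉ Set.Ioc (min x y) (max x y)}
      {y | y ∈ Set.Ico (0:ℝ) 1 ∧ ∀ s,
        (s ∈ Set.Ico (0:ℝ) 1 ∧ ∃ j < p, f^[j] s ∈ S) →
        s ∉ Set.Ioc (min x y) (max x y)} ∧
    ∀ z ∈ {y | y ∈ Set.Ico (0:ℝ) 1 ∧ ∀ s,
        (s ∈ Set.Ico (0:ℝ) 1 ∧ ∃ j < p, f^[j] s ∈ S) →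
        s ∉ Set.Ioc (min x y) (max x y)},
      omegaSet f z = Set.range fun n => f^[n] x := by
  have key := key_lemma f S lam hlam0 hSsub hmap hpiece
  set W : Set ℝ := {y | y ∈ Set.Ico (0:ℝ) 1 ∧ ∀ s,
      (s ∈ Set.Ico (0:ℝ) 1 ∧ ∃ j < p, f^[j] s ∈ S) →
      s ∉ Set.Ioc (min x y) (max x y)} with hWdef
  have hppos : 0 < p := hp
  have hlamp1 : lam ^ p ≤ 1 := pow_le_one₀ hlam0.le hlam1.le
  -- one-step estimate on W, for k ≤ p
  have habs : ∀ k ≤ p, ∀ w, w ∈ W → |f^[k] w - f^[k] x| ≤ lam ^ k * |w - x| := by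
    intro k hk w hw
    obtain ⟨hw1, hw2⟩ := hw
    rcases le_total x w with hxw | hwx
    · have hfree : ∀ s, s ∈ Set.Ico (0:ℝ) 1 → (∃ j < k, f^[j] s ∈ S) →
          s ∉ Set.Ioc x w := by
        rintro s hs ⟨j, hj, hjs⟩ hmem
        refine hw2 s ⟨hs, j, lt_of_lt_of_le hj hk, hjs⟩ ?_
        rwa [min_eq_left hxw, max_eq_right hxw]
      obtain ⟨ha, hb⟩ := key k x w hx hw1 hxw hfree
      rw [abs_of_nonneg (by linarith), abs_of_nonneg (by linarith)]
      exact hb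
    · have hfree : ∀ s, s ∈ Set.Ico (0:ℝ) 1 → (∃ j < k, f^[j] s ∈ S) →
          s ∉ Set.Ioc w x := by
        rintro s hs ⟨j, hj, hjs⟩ hmem
        refine hw2 s ⟨hs, j, lt_of_lt_of_le hj hk, hjs⟩ ?_
        rwa [min_eq_right hwx, max_eq_left hwx]
      obtain ⟨ha, hb⟩ := key k w x hw1 hx hwx hfree
      rw [abs_sub_comm, abs_sub_comm w x, abs_of_nonneg (sub_nonneg.mpr ha),
        abs_of_nonneg (sub_nonneg.mpr hwx)]
      exact hb
  -- f^[p] maps W into W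
  have hstep : ∀ w, w ∈ W → f^[p] w ∈ W := by
    intro w hw
    have hw1 := hw.1
    have hw2 := hw.2
    have hmem : f^[p] w ∈ Set.Ico (0:ℝ) 1 := hmap.iterate p hw1
    refine ⟨hmem, ?_⟩
    have hab := habs p le_rfl w hw
    rw [hxper] at hab
    rcases le_total x w with hxw | hwx
    · have hfree : ∀ s, s ∈ Set.Ico (0:ℝ) 1 → (∃ j < p, f^[j] s ∈ S) →
          s ∉ Set.Ioc x w := by
        rintro s hs hj hmem'
        refine hw2 s ⟨hs, hj⟩ ?_
        rwa [min_eq_left hxw, max_eq_right hxw]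
      obtain ⟨ha, _⟩ := key p x w hx hw1 hxw fun s hs hj => hfree s hs hj
      rw [hxper] at ha
      have h1 : f^[p] w - x ≤ w - x := by
        rw [abs_of_nonneg (by linarith)] at hab
        calc f^[p] w - x ≤ lam ^ p * |w - x| := hab
          _ ≤ 1 * |w - x| := by
              apply mul_le_mul_of_nonneg_right hlamp1 (abs_nonneg _)
          _ = w - x := by rw [one_mul, abs_of_nonneg (by linarith)]
      intro s hs hmem'
      rw [min_eq_left ha, max_eq_right ha] at hmem'
      exact hfree s hs.1 hs.2 ⟨hmem'.1, by linarith [hmem'.2]⟩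
    · have hfree : ∀ s, s ∈ Set.Ico (0:ℝ) 1 → (∃ j < p, f^[j] s ∈ S) →
          s ∉ Set.Ioc w x := by
        rintro s hs hj hmem'
        refine hw2 s ⟨hs, hj⟩ ?_
        rwa [min_eq_right hwx, max_eq_left hwx]
      obtain ⟨ha, _⟩ := key p w x hw1 hx hwx fun s hs hj => hfree s hs hj
      rw [hxper] at ha
      have h1 : w ≤ f^[p] w := by
        rw [abs_sub_comm, abs_of_nonneg (by linarith)] at hab
        have : x - f^[p] w ≤ x - w := by
          calc x - f^[p] w ≤ lam ^ p * |w - x| := hab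
            _ ≤ 1 * |w - x| := by
                apply mul_le_mul_of_nonneg_right hlamp1 (abs_nonneg _)
            _ = x - w := by rw [one_mul, abs_sub_comm, abs_of_nonneg (by linarith)]
        linarith
      intro s hs hmem'
      rw [min_eq_right ha, max_eq_left ha] at hmem'
      exact hfree s hs.1 hs.2 ⟨by linarith [hmem'.1], hmem'.2⟩
  refine ⟨hstep, ?_⟩
  intro z hz
  -- iterated estimates
  have hiter : ∀ n : ℕ, f^[n * p] z ∈ W ∧ |f^[n * p] z - x| ≤ (lam ^ p) ^ n * |z - x| := by
    intro n
    induction n with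
    | zero => simpa using hz
    | succ n ih =>
      have heq : f^[(n + 1) * p] z = f^[p] (f^[n * p] z) := by
        rw [show (n + 1) * p = p + n * p by ring, Function.iterate_add_apply]
      constructor
      · rw [heq]; exact hstep _ ih.1
      · rw [heq]
        have := habs p le_rfl _ ih.1
        rw [hxper] at this
        calc |f^[p] (f^[n * p] z) - x| ≤ lam ^ p * |f^[n * p] z - x| := this
          _ ≤ lam ^ p * ((lam ^ p) ^ n * |z - x|) := by
              apply mul_le_mul_of_nonneg_left ih.2 (pow_nonneg hlam0.le p)
          _ = (lam ^ p) ^ (n + 1) * |z - x| := by ring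
  have hclose : ∀ n r : ℕ, r ≤ p →
      |f^[n * p + r] z - f^[r] x| ≤ (lam ^ p) ^ n * |z - x| := by
    intro n r hr
    have heq : f^[n * p + r] z = f^[r] (f^[n * p] z) := by
      rw [show n * p + r = r + n * p by ring, Function.iterate_add_apply]
    rw [heq]
    calc |f^[r] (f^[n * p] z) - f^[r] x| ≤ lam ^ r * |f^[n * p] z - x| :=
          habs r hr _ (hiter n).1
      _ ≤ 1 * ((lam ^ p) ^ n * |z - x|) := by
          apply mul_le_mul (pow_le_one₀ hlam0.le hlam1.le) (hiter n).2 (abs_nonneg _)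
            zero_le_one
      _ = (lam ^ p) ^ n * |z - x| := one_mul _
  have hlamp0 : 0 ≤ lam ^ p := pow_nonneg hlam0.le p
  have htend0 : Filter.Tendsto (fun n : ℕ => (lam ^ p) ^ n * |z - x|)
      Filter.atTop (nhds 0) := by
    have := (tendsto_pow_atTop_nhds_zero_of_lt_one hlamp0
      (pow_lt_one₀ hlam0.le hlam1 hppos.ne')).mul_const |z - x|
    simpa using this
  have hper : Function.IsPeriodicPt f p x := hxper
  ext y
  simp only [omegaSet, Set.mem_setOf_eq, Set.mem_range]
  constructor
  · -- ω ⊆ orbit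
    intro hy
    by_contra hy'
    push_neg at hy'
    -- minimal distance to the (finite) orbit
    have hne : (Finset.range p).Nonempty := ⟨0, Finset.mem_range.mpr hppos⟩
    set T : Finset ℝ := (Finset.range p).image (fun r => |y - f^[r] x|) with hT
    have hTne : T.Nonempty := hne.image _
    set δ : ℝ := T.min' hTne with hδ
    have hδle : ∀ r < p, δ ≤ |y - f^[r] x| := by
      intro r hr
      exact Finset.min'_le _ _ (Finset.mem_image.mpr ⟨r, Finset.mem_range.mpr hr, rfl⟩)
    have hδpos : 0 < δ := by
      obtain ⟨r, hr, hval⟩ := Finset.mem_image.mp (T.min'_mem hTne)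
      rw [hδ, ← hval]
      exact abs_pos.mpr (sub_ne_zero.mpr (Ne.symm (hy' r)))
    obtain ⟨k0, hk0⟩ := (htend0.eventually (gt_mem_nhds (by positivity : (0:ℝ) < δ / 2))).exists
    -- eventually the orbit of z is δ/2-close to the orbit of x
    have hev : ∀ n ≥ k0 * p, ∃ r < p, |f^[n] z - f^[r] x| < δ / 2 := by
      intro n hn
      refine ⟨n % p, Nat.mod_lt _ hppos, ?_⟩
      have hdiv : k0 ≤ n / p := Nat.le_div_iff_mul_le hppos |>.mpr hn
      have heqn : (n / p) * p + n % p = n := by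
        rw [Nat.div_add_mod']
      calc |f^[n] z - f^[n % p] x| = |f^[(n / p) * p + n % p] z - f^[n % p] x| := by
            rw [heqn]
        _ ≤ (lam ^ p) ^ (n / p) * |z - x| := hclose _ _ (Nat.mod_lt _ hppos).le
        _ ≤ (lam ^ p) ^ k0 * |z - x| := by
            apply mul_le_mul_of_nonneg_right
              (pow_le_pow_of_le_one hlamp0 hlamp1 hdiv) (abs_nonneg _)
        _ < δ / 2 := hk0
    have hfreq : ∃ᶠ n in Filter.atTop, f^[n] z ∈ Metric.ball y (δ / 2) :=
      mapClusterPt_iff_frequently.mp hy _ (Metric.ball_mem_nhds y (by positivity))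
    obtain ⟨n, hn1, hn2⟩ := (hfreq.and_eventually (Filter.eventually_ge_atTop (k0 * p))).exists
    obtain ⟨r, hr, hrb⟩ := hev n hn2
    have h1 : |f^[n] z - y| < δ / 2 := by
      have := hn1
      rwa [Metric.mem_ball, Real.dist_eq] at this
    have := hδle r hr
    have : δ ≤ |y - f^[n] z| + |f^[n] z - f^[r] x| := le_trans this (abs_sub_le _ _ _)
    rw [abs_sub_comm y _] at this
    linarith
  · -- orbit ⊆ ω
    rintro ⟨m, rfl⟩
    set q := m / p with hq
    set r := m % p with hr
    have hrp : r < p := Nat.mod_lt _ hppos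
    have hφ : Filter.Tendsto (fun k : ℕ => k * p + m) Filter.atTop Filter.atTop := by
      apply Filter.tendsto_atTop_mono (fun k => ?_) Filter.tendsto_id
      calc k = k * 1 := (mul_one k).symm
        _ ≤ k * p := Nat.mul_le_mul_left k hp
        _ ≤ k * p + m := Nat.le_add_right _ _
    have hconv : Filter.Tendsto (fun k : ℕ => f^[k * p + m] z) Filter.atTop
        (nhds (f^[m] x)) := by
      rw [tendsto_iff_dist_tendsto_zero]
      apply squeeze_zero (fun k => dist_nonneg)
        (g := fun k : ℕ => (lam ^ p) ^ (k + q) * |z - x|)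
      · intro k
        have heqn : k * p + m = (k + q) * p + r := by
          rw [hr, hq, add_mul, add_assoc, Nat.div_add_mod']
        have hmx : f^[m] x = f^[r] x := (hper.iterate_mod_apply m).symm
        rw [Real.dist_eq, heqn, hmx]
        exact hclose _ _ hrp.le
      · exact htend0.comp (Filter.tendsto_add_atTop_nat q)
    exact MapClusterPt.of_comp hφ hconv.mapClusterPt
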